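/- Let A ∈ ℝ^{n×d} have full column rank with SVD A = UΣVᵀ, let Π satisfy ‖I − UᵀΠΠᵀU‖₂ ≤ ε with 0 ≤ ε < 1, and set Ã = (AᵀΠΠᵀA)^{1/2}. Define the true leverage scores τ_i = ‖e_iᵀ A A⁺‖₂² and the estimates τ̃_i = ‖e_iᵀ A Ã^{-1}‖₂². Then for every i ∈ [n], |τ̃_i − τ_i| ≤ (ε/(1−ε))·τ_i. -/

import Mathlib

open Matrix

/-- Squared Euclidean norm of a vector. -/
noncomputable def sqnorm2 {n : ℕ} (v : Fin n → ℝ) : ℝ := ∑ i, (v i) ^ 2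

/-- Spectral (operator) norm of a real matrix. -/
noncomputable def specNorm {m n : ℕ} (M : Matrix (Fin m) (Fin n) ℝ) : ℝ :=
  sSup {c | ∃ x : Fin n → ℝ, sqnorm2 x = 1 ∧ c = Real.sqrt (sqnorm2 (M.mulVec x))}

open scoped ComplexOrder in
noncomputable def Matrix.PosSemidef.sqrt {n : Type*} [Fintype n] [DecidableEq n]
    {𝕜 : Type*} [RCLike 𝕜] {A : Matrix n n 𝕜} (hA : A.PosSemidef) : Matrix n n 𝕜 :=
  hA.1.eigenvectorUnitary.1 * diagonal ((↑) ∘ (√·) ∘ hA.1.eigenvalues) *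
  (star hA.1.eigenvectorUnitary : Matrix n n 𝕜)

lemma psd_sqrt_mul_self {d : ℕ} {G : Matrix (Fin d) (Fin d) ℝ} (hPSD : G.PosSemidef) :
    hPSD.sqrt * hPSD.sqrt = G := by
  have hs := hPSD.1.spectral_theorem
  have hu : (star hPSD.1.eigenvectorUnitary : Matrix (Fin d) (Fin d) ℝ) *
      hPSD.1.eigenvectorUnitary.1 = 1 := Unitary.coe_star_mul_self _
  conv_rhs => rw [hs]
  rw [Unitary.conjStarAlgAut_apply]
  simp only [Matrix.PosSemidef.sqrt, Matrix.mul_assoc]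
  rw [← Matrix.mul_assoc _ hPSD.1.eigenvectorUnitary.1, hu, Matrix.one_mul,
    ← Matrix.mul_assoc (diagonal _), diagonal_mul_diagonal]
  congr 3
  funext i
  simp [Real.mul_self_sqrt (hPSD.eigenvalues_nonneg i)]

lemma psd_sqrt_transpose {d : ℕ} {G : Matrix (Fin d) (Fin d) ℝ} (hPSD : G.PosSemidef) :
    hPSD.sqrtᵀ = hPSD.sqrt := by
  simp only [Matrix.PosSemidef.sqrt, Matrix.transpose_mul, diagonal_transpose,
    Matrix.mul_assoc]
  have h1 : (star hPSD.1.eigenvectorUnitary : Matrix (Fin d) (Fin d) ℝ)ᵀ =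
      hPSD.1.eigenvectorUnitary.1 := by
    rw [Matrix.star_eq_conjTranspose,
      Matrix.conjTranspose_eq_transpose_of_trivial, Matrix.transpose_transpose]
  have h2 : (hPSD.1.eigenvectorUnitary.1)ᵀ =
      (star hPSD.1.eigenvectorUnitary : Matrix (Fin d) (Fin d) ℝ) := by
    rw [Matrix.star_eq_conjTranspose,
      Matrix.conjTranspose_eq_transpose_of_trivial]
  rw [h1, h2]

lemma dot_cs {d : ℕ} (x y : Fin d → ℝ) :
    (x ⬝ᵥ y) ^ 2 ≤ (x ⬝ᵥ x) * (y ⬝ᵥ y) := by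
  simpa [dotProduct, pow_two] using
    Finset.sum_mul_sq_le_sq_mul_sq Finset.univ x y

lemma sqnorm2_eq_dot {d : ℕ} (v : Fin d → ℝ) : sqnorm2 v = v ⬝ᵥ v := by
  simp [sqnorm2, dotProduct, pow_two]

lemma dot_symm {d : ℕ} (M : Matrix (Fin d) (Fin d) ℝ) (hsym : Mᵀ = M)
    (x y : Fin d → ℝ) : y ⬝ᵥ M.mulVec x = x ⬝ᵥ M.mulVec y := by
  have hM : ∀ j k, M j k = M k j := fun j k => by
    conv_lhs => rw [← hsym]
    rfl
  calc y ⬝ᵥ M.mulVec x = ∑ j, ∑ k, y j * (M j k * x k) := by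
        simp [dotProduct, Matrix.mulVec, Finset.mul_sum]
    _ = ∑ k, ∑ j, y j * (M j k * x k) := Finset.sum_comm
    _ = x ⬝ᵥ M.mulVec y := by
        simp only [dotProduct, Matrix.mulVec, Finset.mul_sum]
        refine Finset.sum_congr rfl fun k _ => Finset.sum_congr rfl fun j _ => ?_
        rw [hM j k]; ring

lemma psd_cs {d : ℕ} (M : Matrix (Fin d) (Fin d) ℝ) (hsym : Mᵀ = M)
    (hpsd : ∀ z : Fin d → ℝ, 0 ≤ z ⬝ᵥ M.mulVec z) (x y : Fin d → ℝ) :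
    (x ⬝ᵥ M.mulVec y) ^ 2 ≤ (x ⬝ᵥ M.mulVec x) * (y ⬝ᵥ M.mulVec y) := by
  have hxy : y ⬝ᵥ M.mulVec x = x ⬝ᵥ M.mulVec y := dot_symm M hsym x y
  set a : ℝ := y ⬝ᵥ M.mulVec y with ha
  set b : ℝ := x ⬝ᵥ M.mulVec y with hb
  set c : ℝ := x ⬝ᵥ M.mulVec x with hc
  have key : ∀ t : ℝ, 0 ≤ a * (t * t) + (2 * b) * t + c := by
    intro t
    have h0 := hpsd (x + t • y)
    have : (x + t • y) ⬝ᵥ M.mulVec (x + t • y)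
        = a * (t * t) + (2 * b) * t + c := by
      rw [Matrix.mulVec_add, Matrix.mulVec_smul]
      simp [add_dotProduct, dotProduct_add, smul_dotProduct,
        dotProduct_smul, smul_eq_mul, hxy]
      ring
    linarith [this ▸ h0]
  have hd := discrim_le_zero key
  rw [discrim] at hd
  nlinarith [hd]

lemma quad_bound {d : ℕ} (B : Matrix (Fin d) (Fin d) ℝ) (ε : ℝ)
    (hB : specNorm B ≤ ε) (x : Fin d → ℝ) :
    |x ⬝ᵥ B.mulVec x| ≤ ε * (x ⬝ᵥ x) := by
  have hbdd : BddAbove {c | ∃ x : Fin d → ℝ, sqnorm2 x = 1 ∧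
      c = Real.sqrt (sqnorm2 (B.mulVec x))} := by
    refine ⟨Real.sqrt (∑ i, ∑ j, (B i j) ^ 2), ?_⟩
    rintro c ⟨u, hu, rfl⟩
    apply Real.sqrt_le_sqrt
    rw [sqnorm2]
    refine Finset.sum_le_sum fun i _ => ?_
    calc (B.mulVec u i) ^ 2 = (∑ j, B i j * u j) ^ 2 := by
          simp [Matrix.mulVec, dotProduct]
      _ ≤ (∑ j, (B i j) ^ 2) * (∑ j, (u j) ^ 2) :=
          Finset.sum_mul_sq_le_sq_mul_sq Finset.univ _ _
      _ = ∑ j, (B i j) ^ 2 := by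
          rw [show (∑ j, (u j)^2) = sqnorm2 u from rfl, hu, mul_one]
  have hunit : ∀ u : Fin d → ℝ, sqnorm2 u = 1 → |u ⬝ᵥ B.mulVec u| ≤ ε := by
    intro u hu
    have hmem : Real.sqrt (sqnorm2 (B.mulVec u)) ∈ {c | ∃ x : Fin d → ℝ,
        sqnorm2 x = 1 ∧ c = Real.sqrt (sqnorm2 (B.mulVec x))} := ⟨u, hu, rfl⟩
    have hle : Real.sqrt (sqnorm2 (B.mulVec u)) ≤ ε :=
      le_trans (le_csSup hbdd hmem) hB
    have hsq : (u ⬝ᵥ B.mulVec u) ^ 2 ≤ sqnorm2 (B.mulVec u) := by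
      have := dot_cs u (B.mulVec u)
      rw [← sqnorm2_eq_dot, ← sqnorm2_eq_dot, hu, one_mul] at this
      exact this
    calc |u ⬝ᵥ B.mulVec u| = Real.sqrt ((u ⬝ᵥ B.mulVec u) ^ 2) :=
          (Real.sqrt_sq_eq_abs _).symm
      _ ≤ Real.sqrt (sqnorm2 (B.mulVec u)) := Real.sqrt_le_sqrt hsq
      _ ≤ ε := hle
  by_cases hx : x = 0
  · simp [hx]
  have hxx : 0 < x ⬝ᵥ x := by
    rcases (dotProduct_self_eq_zero (v := x)).not.mpr hx with h
    have h0 : 0 ≤ x ⬝ᵥ x := by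
      rw [← sqnorm2_eq_dot]; exact Finset.sum_nonneg fun i _ => sq_nonneg _
    exact lt_of_le_of_ne h0 (Ne.symm h)
  set c : ℝ := Real.sqrt (x ⬝ᵥ x) with hc
  have hc0 : 0 < c := Real.sqrt_pos.mpr hxx
  have hc2 : c ^ 2 = x ⬝ᵥ x := Real.sq_sqrt hxx.le
  set u : Fin d → ℝ := c⁻¹ • x with hudef
  have huu : sqnorm2 u = 1 := by
    rw [sqnorm2_eq_dot, hudef]
    simp only [smul_dotProduct, dotProduct_smul, smul_eq_mul]
    field_simp
    rw [← hc2]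
  have hxu : x ⬝ᵥ B.mulVec x = c ^ 2 * (u ⬝ᵥ B.mulVec u) := by
    have : x = c • u := by
      rw [hudef, smul_smul, mul_inv_cancel₀ hc0.ne', one_smul]
    rw [this, Matrix.mulVec_smul]
    simp only [smul_dotProduct, dotProduct_smul, smul_eq_mul]
    ring
  rw [hxu, abs_mul, abs_of_nonneg (sq_nonneg c : (0:ℝ) ≤ c ^ 2), ← hc2]
  calc c ^ 2 * |u ⬝ᵥ B.mulVec u| ≤ c ^ 2 * ε :=
        mul_le_mul_of_nonneg_left (hunit u huu) (sq_nonneg c)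
    _ = ε * c ^ 2 := by ring

set_option maxHeartbeats 1000000 in
/-- relative-error leverage scores.  Here the true leverage score is
`τ i = ‖e_iᵀ A A⁺‖₂² = ‖e_iᵀ U‖₂²` (the squared norm of the i-th row of `U`), and the
estimate is `τ̃ i = ‖e_iᵀ A Ã⁻¹‖₂²` where `Ã = (AᵀΠΠᵀA)^{1/2}`. -/
theorem stmt5 {n d r : ℕ} (ε : ℝ) (hε0 : 0 ≤ ε) (hε1 : ε < 1)
    (A U : Matrix (Fin n) (Fin d) ℝ) (S V : Matrix (Fin d) (Fin d) ℝ)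
    (σ : Fin d → ℝ) (hσ : ∀ i, 0 < σ i) (hS : S = Matrix.diagonal σ)
    (hU : Uᵀ * U = 1) (hV : Vᵀ * V = 1) (hA : A = U * S * Vᵀ)
    (Pi : Matrix (Fin n) (Fin r) ℝ)
    (hPi : specNorm ((1 : Matrix (Fin d) (Fin d) ℝ) - Uᵀ * Pi * Piᵀ * U) ≤ ε)
    (hPSD : (Aᵀ * Pi * Piᵀ * A).PosSemidef)
    (τ τt : Fin n → ℝ)
    (hτ : ∀ i, τ i = ∑ j, (U i j) ^ 2)
    (hτt : ∀ i, τt i = ∑ j, ((A * hPSD.sqrt⁻¹) i j) ^ 2) :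
    ∀ i, |τt i - τ i| ≤ (ε / (1 - ε)) * τ i := by
  have h1ε : (0:ℝ) < 1 - ε := by linarith
  set M : Matrix (Fin d) (Fin d) ℝ := Uᵀ * Pi * Piᵀ * U with hM
  have hMsym : Mᵀ = M := by
    rw [hM]
    simp [Matrix.transpose_mul, Matrix.mul_assoc]
  -- quadratic-form bounds on M
  have hquad : ∀ x : Fin d → ℝ, |x ⬝ᵥ ((1 : Matrix (Fin d) (Fin d) ℝ) - M).mulVec x|
      ≤ ε * (x ⬝ᵥ x) := fun x => quad_bound _ ε hPi x
  have hdotnn : ∀ x : Fin d → ℝ, 0 ≤ x ⬝ᵥ x := fun x => by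
    rw [← sqnorm2_eq_dot]; exact Finset.sum_nonneg fun i _ => sq_nonneg _
  have hsplit : ∀ x : Fin d → ℝ,
      x ⬝ᵥ ((1 : Matrix (Fin d) (Fin d) ℝ) - M).mulVec x
        = x ⬝ᵥ x - x ⬝ᵥ M.mulVec x := by
    intro x
    rw [Matrix.sub_mulVec, Matrix.one_mulVec, dotProduct_sub]
  have hlow : ∀ x : Fin d → ℝ, (1 - ε) * (x ⬝ᵥ x) ≤ x ⬝ᵥ M.mulVec x := by
    intro x
    have := abs_le.mp (hquad x)
    rw [hsplit x] at this
    nlinarith [this.1, this.2]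
  have hhigh : ∀ x : Fin d → ℝ, x ⬝ᵥ M.mulVec x ≤ (1 + ε) * (x ⬝ᵥ x) := by
    intro x
    have := abs_le.mp (hquad x)
    rw [hsplit x] at this
    nlinarith [this.1, this.2]
  have hMpsd : ∀ z : Fin d → ℝ, 0 ≤ z ⬝ᵥ M.mulVec z := fun z =>
    le_trans (mul_nonneg h1ε.le (hdotnn z)) (hlow z)
  -- M is invertible
  have hMdet : IsUnit M.det := by
    rw [isUnit_iff_ne_zero]
    intro h0
    obtain ⟨v, hv, hMv⟩ := (Matrix.exists_mulVec_eq_zero_iff).mpr h0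
    have := hlow v
    rw [hMv] at this
    simp only [dotProduct_zero] at this
    have hvv : 0 < v ⬝ᵥ v := by
      have := (dotProduct_self_eq_zero (v := v)).not.mpr hv
      exact lt_of_le_of_ne (hdotnn v) (Ne.symm this)
    nlinarith
  have hMinv : M * M⁻¹ = 1 := Matrix.mul_nonsing_inv M hMdet
  -- orthogonality / diagonal facts
  have hVVt : V * Vᵀ = 1 := mul_eq_one_comm.mp hV
  have hSsym : Sᵀ = S := by rw [hS]; exact Matrix.diagonal_transpose σ
  have hSdet : IsUnit S.det := by
    rw [hS, Matrix.det_diagonal, isUnit_iff_ne_zero]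
    exact (Finset.prod_pos fun i _ => hσ i).ne'
  have hSSi : S * S⁻¹ = 1 := Matrix.mul_nonsing_inv S hSdet
  have hSiS : S⁻¹ * S = 1 := Matrix.nonsing_inv_mul S hSdet
  -- cancellation helpers
  have cV : ∀ (k : ℕ) (X : Matrix (Fin d) (Fin k) ℝ), Vᵀ * (V * X) = X := fun k X => by
    rw [← Matrix.mul_assoc, hV, Matrix.one_mul]
  have cS1 : ∀ (k : ℕ) (X : Matrix (Fin d) (Fin k) ℝ), S * (S⁻¹ * X) = X := fun k X => by
    rw [← Matrix.mul_assoc, hSSi, Matrix.one_mul]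
  have cS2 : ∀ (k : ℕ) (X : Matrix (Fin d) (Fin k) ℝ), S⁻¹ * (S * X) = X := fun k X => by
    rw [← Matrix.mul_assoc, hSiS, Matrix.one_mul]
  have cM : ∀ (k : ℕ) (X : Matrix (Fin d) (Fin k) ℝ), M * (M⁻¹ * X) = X := fun k X => by
    rw [← Matrix.mul_assoc, hMinv, Matrix.one_mul]
  -- G and its inverse
  set G : Matrix (Fin d) (Fin d) ℝ := Aᵀ * Pi * Piᵀ * A with hG
  set W : Matrix (Fin d) (Fin d) ℝ := V * (S⁻¹ * (M⁻¹ * (S⁻¹ * Vᵀ))) with hW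
  have hGexp : G = V * (S * (M * (S * Vᵀ))) := by
    rw [hG, hA, hM]
    simp only [Matrix.transpose_mul, Matrix.transpose_transpose, hSsym, Matrix.mul_assoc]
  have hGW : G * W = 1 := by
    rw [hGexp, hW]
    simp only [Matrix.mul_assoc]
    rw [cV, cS1, cM, cS1]
    exact hVVt
  have hGinv : G⁻¹ = W := Matrix.inv_eq_right_inv hGW
  have hGdet : IsUnit G.det := by
    have := congrArg Matrix.det hGW
    rw [Matrix.det_mul, Matrix.det_one] at this
    exact IsUnit.of_mul_eq_one _ this
  -- the square root
  set R : Matrix (Fin d) (Fin d) ℝ := hPSD.sqrt with hR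
  have hRR : R * R = G := psd_sqrt_mul_self hPSD
  have hRsym : Rᵀ = R := by
    exact psd_sqrt_transpose hPSD
  have hRdet : IsUnit R.det := by
    have : R.det * R.det = G.det := by rw [← Matrix.det_mul, hRR]
    rw [isUnit_iff_ne_zero]
    intro h0
    rw [h0, mul_zero] at this
    exact (isUnit_iff_ne_zero.mp hGdet) this.symm
  have hRinvRinv : R⁻¹ * R⁻¹ = G⁻¹ := by
    rw [← hRR, Matrix.mul_inv_rev]
  -- key identity : (A * R⁻¹) * (A * R⁻¹)ᵀ = U * M⁻¹ * Uᵀ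
  have hkey : (A * R⁻¹) * (A * R⁻¹)ᵀ = U * (M⁻¹ * Uᵀ) := by
    rw [Matrix.transpose_mul, Matrix.transpose_nonsing_inv, hRsym]
    have : A * R⁻¹ * (R⁻¹ * Aᵀ) = A * (G⁻¹ * Aᵀ) := by
      rw [← hRinvRinv]
      simp only [Matrix.mul_assoc]
    rw [this, hGinv, hW, hA]
    simp only [Matrix.transpose_mul, Matrix.transpose_transpose, hSsym, Matrix.mul_assoc]
    rw [cV, cS1, cV, cS2]

  intro i
  -- entrywise identities
  set u : Fin d → ℝ := fun j => U i j with hu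
  have hτu : τ i = u ⬝ᵥ u := by
    rw [hτ i, dotProduct]
    exact Finset.sum_congr rfl fun j _ => (pow_two _)
  have hτtu : τt i = u ⬝ᵥ M⁻¹.mulVec u := by
    rw [hτt i]
    have h1 : ∑ j, ((A * hPSD.sqrt⁻¹) i j) ^ 2
        = ((A * R⁻¹) * (A * R⁻¹)ᵀ) i i := by
      rw [Matrix.mul_apply]
      exact Finset.sum_congr rfl fun j _ => by
        rw [Matrix.transpose_apply, pow_two, hR]
    rw [h1, hkey, Matrix.mul_apply]
    simp only [Matrix.mul_apply, Matrix.transpose_apply, dotProduct, Matrix.mulVec, hu]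
  -- quadratic-form bounds for M⁻¹
  set q : ℝ := u ⬝ᵥ M⁻¹.mulVec u with hq
  set X : ℝ := u ⬝ᵥ u with hX
  set y : Fin d → ℝ := M⁻¹.mulVec u with hy
  have hMy : M.mulVec y = u := by
    rw [hy, Matrix.mulVec_mulVec, hMinv, Matrix.one_mulVec]
  have hqy : q = y ⬝ᵥ M.mulVec y := by
    rw [hq, dotProduct_comm, ← hMy]
  have hXnn : 0 ≤ X := hdotnn u
  have hYnn : 0 ≤ y ⬝ᵥ y := hdotnn y
  have hq0 : 0 ≤ q := by rw [hqy]; exact hMpsd y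
  -- upper bound : (1-ε) q ≤ X
  have hupper : (1 - ε) * q ≤ X := by
    have h1 : q ^ 2 ≤ X * (y ⬝ᵥ y) := by
      rw [hq, hX]; exact dot_cs u y
    have h2 : (1 - ε) * (y ⬝ᵥ y) ≤ q := by rw [hqy]; exact hlow y
    rcases eq_or_lt_of_le hq0 with h | h
    · rw [← h, mul_zero]; exact hXnn
    · have hA1 : (1 - ε) * q ^ 2 ≤ (1 - ε) * (X * (y ⬝ᵥ y)) :=
        mul_le_mul_of_nonneg_left h1 h1ε.le
      have hA2 : X * ((1 - ε) * (y ⬝ᵥ y)) ≤ X * q :=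
        mul_le_mul_of_nonneg_left h2 hXnn
      have hA3 : (1 - ε) * q * q ≤ X * q := by nlinarith [hA1, hA2]
      exact le_of_mul_le_mul_right hA3 h
  -- lower bound : X ≤ (1+ε) q
  have hlower : X ≤ (1 + ε) * q := by
    have hXMy : y ⬝ᵥ M.mulVec u = X := by
      calc y ⬝ᵥ M.mulVec u = u ⬝ᵥ M.mulVec y := dot_symm M hMsym u y
        _ = u ⬝ᵥ u := by rw [hMy]
        _ = X := hX.symm
    have hcs : (y ⬝ᵥ M.mulVec u) ^ 2 ≤ (y ⬝ᵥ M.mulVec y) * (u ⬝ᵥ M.mulVec u) :=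
      psd_cs M hMsym hMpsd y u
    have hMu : u ⬝ᵥ M.mulVec u ≤ (1 + ε) * X := by
      calc u ⬝ᵥ M.mulVec u ≤ (1 + ε) * (u ⬝ᵥ u) := hhigh u
        _ = (1 + ε) * X := by rw [← hX]
    have e1 : X ^ 2 ≤ q * ((1 + ε) * X) := by
      calc X ^ 2 = (y ⬝ᵥ M.mulVec u) ^ 2 := by rw [hXMy]
        _ ≤ (y ⬝ᵥ M.mulVec y) * (u ⬝ᵥ M.mulVec u) := hcs
        _ = q * (u ⬝ᵥ M.mulVec u) := by rw [← hqy]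
        _ ≤ q * ((1 + ε) * X) := mul_le_mul_of_nonneg_left hMu hq0
    rcases eq_or_lt_of_le hXnn with h | h
    · rw [← h]; nlinarith [hq0, hε0]
    · refine le_of_mul_le_mul_right ?_ h
      nlinarith [e1]
  -- conclude
  have hεq : ε * q ≤ ε / (1 - ε) * X := by
    have h2 : ε * ((1 - ε) * q) ≤ ε * X := mul_le_mul_of_nonneg_left hupper hε0
    rw [div_mul_eq_mul_div, le_div_iff₀ h1ε]
    have h3 : ε * q * (1 - ε) = ε * ((1 - ε) * q) := by ring
    linarith [h2]
  rw [hτtu, hτu, abs_le]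
  constructor
  · have h4 : (1 + ε) * q = q + ε * q := by ring
    have hXq : X - q ≤ ε * q := by linarith [hlower]
    linarith [hεq]
  · have h5 : (1 - ε) * q = q - ε * q := by ring
    have hqX : q - X ≤ ε * q := by linarith [hupper]
    linarith [hεq]
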